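/- Let F be a super-operator on ℂ^d and ρ_0 a positive semidefinite d×d complex matrix. If F^n(ρ_0) = 0 for some positive integer n (where F^n is the n-fold composition of F), then F^d(ρ_0) = 0. -/

import Mathlib

open Matrix
open scoped ComplexOrder

/-- The super-operator with Kraus operators `F i`, applied to `ρ`:
`F(ρ) = ∑ i, F i * ρ * (F i)ᴴ`. -/
noncomputable def superApply {d n : ℕ} (F : Fin n → Matrix (Fin d) (Fin d) ℂ)
    (ρ : Matrix (Fin d) (Fin d) ℂ) : Matrix (Fin d) (Fin d) ℂ :=
  ∑ i, F i * ρ * (F i)ᴴ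

variable {d n : ℕ} (F : Fin n → Matrix (Fin d) (Fin d) ℂ)

lemma sum_mulVec' {ι : Type*} (s : Finset ι) (f : ι → Matrix (Fin d) (Fin d) ℂ)
    (x : Fin d → ℂ) : (∑ i ∈ s, f i) *ᵥ x = ∑ i ∈ s, f i *ᵥ x := by
  classical
  induction s using Finset.induction with
  | empty => simp
  | insert _ _ hx ih => rw [Finset.sum_insert hx, Finset.sum_insert hx, add_mulVec, ih]

lemma dotProduct_sum' {ι : Type*} (s : Finset ι) (u : Fin d → ℂ)
    (v : ι → (Fin d → ℂ)) : u ⬝ᵥ (∑ i ∈ s, v i) = ∑ i ∈ s, u ⬝ᵥ v i := by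
  simp only [dotProduct, Finset.sum_apply, Finset.mul_sum]
  exact Finset.sum_comm

lemma psd_sum {ι : Type*} (s : Finset ι) (f : ι → Matrix (Fin d) (Fin d) ℂ)
    (h : ∀ i ∈ s, (f i).PosSemidef) : (∑ i ∈ s, f i).PosSemidef := by
  classical
  induction s using Finset.induction with
  | empty => simpa using Matrix.PosSemidef.zero
  | insert _ _ hx ih =>
    rw [Finset.sum_insert hx]
    refine Matrix.PosSemidef.of_dotProduct_mulVec_nonneg (((h _ (by simp)).1).add ((ih fun i hi => h i (by simp [hi])).1)) fun x => ?_
    rw [add_mulVec, dotProduct_add]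
    exact add_nonneg ((h _ (by simp)).dotProduct_mulVec_nonneg x) ((ih fun i hi => h i (by simp [hi])).dotProduct_mulVec_nonneg x)

lemma superApply_zero : superApply F 0 = 0 := by simp [superApply]

lemma superApply_add (A B : Matrix (Fin d) (Fin d) ℂ) :
    superApply F (A + B) = superApply F A + superApply F B := by
  simp [superApply, mul_add, add_mul, Finset.sum_add_distrib]

lemma superApply_posSemidef {ρ : Matrix (Fin d) (Fin d) ℂ} (hρ : ρ.PosSemidef) :
    (superApply F ρ).PosSemidef :=
  psd_sum _ _ fun i _ => hρ.mul_mul_conjTranspose_same (F i)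

lemma superApply_mulVec_eq_zero_iff {ρ : Matrix (Fin d) (Fin d) ℂ} (hρ : ρ.PosSemidef)
    (x : Fin d → ℂ) :
    (superApply F ρ) *ᵥ x = 0 ↔ ∀ i, ρ *ᵥ ((F i)ᴴ *ᵥ x) = 0 := by
  have key : ∀ i : Fin n, star x ⬝ᵥ ((F i * ρ * (F i)ᴴ) *ᵥ x)
      = star ((F i)ᴴ *ᵥ x) ⬝ᵥ (ρ *ᵥ ((F i)ᴴ *ᵥ x)) := by
    intro i
    rw [← mulVec_mulVec, ← mulVec_mulVec, dotProduct_mulVec (star x),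
      star_mulVec, conjTranspose_conjTranspose]
  constructor
  · intro h0 i
    have hsum : ∑ i : Fin n, star ((F i)ᴴ *ᵥ x) ⬝ᵥ (ρ *ᵥ ((F i)ᴴ *ᵥ x)) = 0 := by
      have : star x ⬝ᵥ (superApply F ρ *ᵥ x) = 0 := by rw [h0, dotProduct_zero]
      rw [show (superApply F ρ) = ∑ i, F i * ρ * (F i)ᴴ from rfl, sum_mulVec' _ _,
        dotProduct_sum' _ _ _] at this
      simpa only [key] using this
    have hterm := (Finset.sum_eq_zero_iff_of_nonneg (fun i _ =>
      hρ.dotProduct_mulVec_nonneg ((F i)ᴴ *ᵥ x))).mp hsum i (Finset.mem_univ i)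
    exact (hρ.dotProduct_mulVec_zero_iff _).mp hterm
  · intro h0
    rw [show (superApply F ρ) = ∑ i, F i * ρ * (F i)ᴴ from rfl, sum_mulVec' _ _ x]
    refine Finset.sum_eq_zero fun i _ => ?_
    rw [← mulVec_mulVec, ← mulVec_mulVec, h0 i, mulVec_zero]

lemma loewner_ker {A B : Matrix (Fin d) (Fin d) ℂ} (hA : A.PosSemidef)
    (hBA : (B - A).PosSemidef) {x : Fin d → ℂ} (hx : B *ᵥ x = 0) : A *ᵥ x = 0 := by
  have hsum : star x ⬝ᵥ (A *ᵥ x) + star x ⬝ᵥ ((B - A) *ᵥ x) = 0 := by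
    rw [← dotProduct_add, ← add_mulVec]
    simp [hx]
  have h1 : star x ⬝ᵥ (A *ᵥ x) = 0 :=
    le_antisymm (by calc star x ⬝ᵥ (A *ᵥ x) ≤ _ := le_add_of_nonneg_right (hBA.dotProduct_mulVec_nonneg x)
                       _ = 0 := hsum) (hA.dotProduct_mulVec_nonneg x)
  exact (hA.dotProduct_mulVec_zero_iff x).mp h1

lemma iterate_psd (k : ℕ) {ρ : Matrix (Fin d) (Fin d) ℂ} (hρ : ρ.PosSemidef) :
    ((superApply F)^[k] ρ).PosSemidef := by
  induction k with
  | zero => simpa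
  | succ m ih => rw [Function.iterate_succ_apply']; exact superApply_posSemidef F ih

theorem terminates_within_dim {d n : ℕ}
    (F : Fin n → Matrix (Fin d) (Fin d) ℂ)
    (hF : (1 - ∑ i, (F i)ᴴ * F i).PosSemidef)
    (ρ₀ : Matrix (Fin d) (Fin d) ℂ) (hρ₀ : ρ₀.PosSemidef)
    (N : ℕ) (hN : 0 < N) (h : (superApply F)^[N] ρ₀ = 0) :
    (superApply F)^[d] ρ₀ = 0 := by
  classical
  set Φ := superApply F with hΦ
  -- ρ_k vanishes for k ≥ N
  have hρzero : ∀ k, N ≤ k → Φ^[k] ρ₀ = 0 := by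
    intro k hk
    obtain ⟨m, rfl⟩ := Nat.exists_eq_add_of_le hk
    rw [Nat.add_comm, Function.iterate_add_apply, h]
    exact Function.iterate_fixed (superApply_zero F) m
  -- σ k = ∑_{j<N} Φ^[k+j] ρ₀
  set σ : ℕ → Matrix (Fin d) (Fin d) ℂ :=
    fun k => ∑ j ∈ Finset.range N, Φ^[k + j] ρ₀ with hσ
  have hσpsd : ∀ k, (σ k).PosSemidef :=
    fun k => psd_sum _ _ fun j _ => iterate_psd F _ hρ₀
  have hσsucc : ∀ k, σ (k + 1) = Φ (σ k) := by
    intro k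
    rw [hσ]
    simp only []
    rw [show Φ (∑ j ∈ Finset.range N, Φ^[k + j] ρ₀)
        = ∑ j ∈ Finset.range N, Φ (Φ^[k + j] ρ₀) from ?_]
    · refine Finset.sum_congr rfl fun j _ => ?_
      rw [show k + 1 + j = (k + j) + 1 from by omega, Function.iterate_succ_apply']
    · rw [hΦ]
      induction (Finset.range N) using Finset.induction with
      | empty => simpa using superApply_zero F
      | insert _ _ hx ih =>
        rw [Finset.sum_insert hx, Finset.sum_insert hx, superApply_add, ih]
  have hσsub : ∀ k, σ k - σ (k + 1) = Φ^[k] ρ₀ := by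
    intro k
    rw [hσ]
    simp only []
    rw [← Finset.sum_sub_distrib]
    have harg : ∀ j : ℕ, k + 1 + j = k + (j + 1) := fun j => by omega
    simp only [harg]
    rw [show ∑ j ∈ Finset.range N, (Φ^[k + j] ρ₀ - Φ^[k + (j + 1)] ρ₀)
        = Φ^[k + 0] ρ₀ - Φ^[k + N] ρ₀ from
      Finset.sum_range_sub' (fun j => Φ^[k + j] ρ₀) N]
    rw [hρzero (k + N) (by omega), Nat.add_zero, sub_zero]
  -- kernels
  set K : ℕ → Submodule ℂ (Fin d → ℂ) := fun k => LinearMap.ker (σ k).mulVecLin with hK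
  have hKmem : ∀ k x, x ∈ K k ↔ σ k *ᵥ x = 0 := fun k x => Iff.rfl
  have hKle : ∀ k, K k ≤ K (k + 1) := by
    intro k x hx
    rw [hKmem] at hx ⊢
    have hd : (σ k - σ (k + 1)).PosSemidef := by rw [hσsub]; exact iterate_psd F _ hρ₀
    exact loewner_ker (hσpsd (k + 1)) (by simpa using hd) hx
  have hKmono : Monotone K := monotone_nat_of_le_succ hKle
  have hKchar : ∀ k x, x ∈ K (k + 1) ↔ ∀ i, (F i)ᴴ *ᵥ x ∈ K k := by
    intro k x
    rw [hKmem, hσsucc, hΦ, superApply_mulVec_eq_zero_iff F (hσpsd k)]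
    exact Iff.rfl
  have hKN : K N = ⊤ := by
    have : σ N = 0 := by
      rw [hσ]
      exact Finset.sum_eq_zero fun j _ => hρzero _ (by omega)
    rw [hK]
    simp only []
    rw [this, Matrix.mulVecLin_zero, LinearMap.ker_zero]
  have hstab : ∀ k, K k = K (k + 1) → ∀ j, K (k + j) = K k := by
    intro k hk j
    induction j with
    | zero => rfl
    | succ m ih =>
      rw [show k + (m + 1) = (k + m) + 1 from rfl]
      ext x
      rw [hKchar]
      simp_rw [ih]
      rw [← hKchar k x, ← hk]
  have hKd : K d = ⊤ := by
    by_cases hex : ∃ k, k < d ∧ K k = K (k + 1)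
    · obtain ⟨k, hkd, hk⟩ := hex
      have h2 := hstab k hk (max N k - k)
      have h3 : K N ≤ K (k + (max N k - k)) := hKmono (by omega)
      rw [hKN, h2] at h3
      exact top_unique (le_trans h3 (hKmono hkd.le))
    · push_neg at hex
      have hrank : ∀ k, k ≤ d → k ≤ Module.finrank ℂ (K k) := by
        intro k
        induction k with
        | zero => intro; exact Nat.zero_le _
        | succ m ih =>
          intro hm
          have hlt : K m < K (m + 1) := lt_of_le_of_ne (hKle m) (hex m (by omega))
          have := Submodule.finrank_lt_finrank_of_lt hlt
          omega
      have h4 : Module.finrank ℂ (K d) = d := by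
        have h5 := Submodule.finrank_le (K d)
        rw [Module.finrank_fin_fun] at h5
        have h6 := hrank d le_rfl
        omega
      exact Submodule.eq_top_of_finrank_eq (by rw [h4, Module.finrank_fin_fun])
  have hσd : σ d = 0 := by
    ext i j
    have hx : σ d *ᵥ Pi.single j 1 = 0 := by
      have : (Pi.single j 1 : Fin d → ℂ) ∈ K d := by rw [hKd]; trivial
      exact this
    have := congrFun hx i
    simpa using this
  have hfin : ∀ x, Φ^[d] ρ₀ *ᵥ x = 0 := by
    intro x
    refine loewner_ker (iterate_psd F d hρ₀) ?_ (B := σ d) (by rw [hσd, Matrix.zero_mulVec])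
    have : σ d - Φ^[d] ρ₀ = σ (d + 1) := by
      rw [← hσsub d]; exact sub_sub_cancel _ _
    rw [this]
    exact hσpsd (d + 1)
  ext i j
  have := congrFun (hfin (Pi.single j 1)) i
  simpa using this
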